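/- arXiv:1109.5586 — 7 statements merged into one kernel-verified Lean document; each statement's English description precedes it below -/
import Mathlib

section
/- Let n ≥ 1 and let a : ℕ → ℝ and b : ℕ → ℝ. Define monic polynomials p : ℕ → ℝ[X] by p 0 = 1, p 1 = X − C(a 0), and p (k+1) = (X − C(a k))·p k − C((b k)²)·p (k−1) for k ≥ 1. Let J(n) be the n×n real symmetric tridiagonal Jacobi matrix with diagonal entries J k k = a k (0 ≤ k < n), off-diagonal entries J k (k+1) = J (k+1) k = b (k+1) (0 ≤ k < n−1), and all other entries 0. Then the characteristic polynomial of J(n) equals p n; consequently the n roots of p n are exactly the eigenvalues of the Jacobi matrix J(n). -/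
open Matrix Polynomial

private noncomputable def Ent (a b : ℕ → ℝ) (i j : ℕ) : Polynomial ℝ :=
  if i = j then X - C (a i)
  else if i + 1 = j then -C (b j)
  else if j + 1 = i then -C (b i)
  else 0

private noncomputable def CM (a b : ℕ → ℝ) (m : ℕ) : Matrix (Fin m) (Fin m) (Polynomial ℝ) :=
  Matrix.of fun i j => Ent a b i j

private lemma coe_succAbove {n : ℕ} (p : Fin (n + 1)) (i : Fin n) :
    ((p.succAbove i : Fin (n + 1)) : ℕ) = if (i : ℕ) < (p : ℕ) then (i : ℕ) else (i : ℕ) + 1 := by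
  rw [Fin.succAbove]
  by_cases h : (i : ℕ) < (p : ℕ)
  · rw [if_pos (by simpa [Fin.lt_def] using h), if_pos h]; simp
  · rw [if_neg (by simpa [Fin.lt_def] using h), if_neg h]; simp

private lemma detCM (a b : ℕ → ℝ) (p : ℕ → Polynomial ℝ)
    (hp0 : p 0 = 1) (hp1 : p 1 = X - C (a 0))
    (hprec : ∀ k, 1 ≤ k →
      p (k + 1) = (X - C (a k)) * p k - C ((b k) ^ 2) * p (k - 1)) :
    ∀ m, (CM a b m).det = p m
  | 0 => by simp [hp0]
  | 1 => by
      rw [det_fin_one, hp1]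
      simp [CM, Ent]
  | (m + 2) => by
      have ihm := detCM a b p hp0 hp1 hprec m
      have ihm1 := detCM a b p hp0 hp1 hprec (m + 1)
      rw [det_succ_row (CM a b (m + 2)) (Fin.last (m + 1))]
      rw [Fin.sum_univ_castSucc, Fin.sum_univ_castSucc]
      have hz : ∀ j : Fin m,
          (-1 : Polynomial ℝ) ^ ((Fin.last (m + 1) : ℕ) + ((j.castSucc.castSucc : Fin (m+2)) : ℕ))
            * CM a b (m + 2) (Fin.last (m + 1)) j.castSucc.castSucc
            * det ((CM a b (m + 2)).submatrix (Fin.last (m + 1)).succAbove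
                (j.castSucc.castSucc).succAbove) = 0 := by
        intro j
        have hj : (j : ℕ) < m := j.isLt
        have : CM a b (m + 2) (Fin.last (m + 1)) j.castSucc.castSucc = 0 := by
          simp only [CM, Matrix.of_apply, Ent, Fin.coe_castSucc, Fin.val_last]
          rw [if_neg (by omega), if_neg (by omega), if_neg (by omega)]
        rw [this, mul_zero, zero_mul]
      rw [Finset.sum_eq_zero (fun j _ => hz j), zero_add]
      -- diagonal (last) term
      have hdiag : CM a b (m + 2) (Fin.last (m + 1)) (Fin.last (m + 1)) = X - C (a (m + 1)) := by
        simp [CM, Ent]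
      have hsub1 : (CM a b (m + 2)).submatrix (Fin.last (m + 1)).succAbove
          (Fin.last (m + 1)).succAbove = CM a b (m + 1) := by
        ext i j
        simp [Matrix.submatrix_apply, Fin.succAbove_last, CM]
      -- off-diagonal term
      have hoff : CM a b (m + 2) (Fin.last (m + 1)) (Fin.castSucc (Fin.last m)) = -C (b (m + 1)) := by
        simp only [CM, Matrix.of_apply, Ent, Fin.coe_castSucc, Fin.val_last]
        rw [if_neg (by omega), if_neg (by omega)]; simp
      set B := (CM a b (m + 2)).submatrix (Fin.last (m + 1)).succAbove
          (Fin.castSucc (Fin.last m)).succAbove with hBdef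
      have hBapply : ∀ i j : Fin (m + 1),
          B i j = Ent a b (i : ℕ) (if (j : ℕ) < m then (j : ℕ) else (j : ℕ) + 1) := by
        intro i j
        rw [hBdef]
        simp only [Matrix.submatrix_apply, Fin.succAbove_last, CM, Matrix.of_apply,
          Fin.coe_castSucc, coe_succAbove, Fin.val_last]
      have hdetB : B.det = -C (b (m + 1)) * p m := by
        rw [det_succ_column B (Fin.last m)]
        rw [Fin.sum_univ_castSucc]
        have hz2 : ∀ i : Fin m,
            (-1 : Polynomial ℝ) ^ (((i.castSucc : Fin (m+1)) : ℕ) + ((Fin.last m : ℕ)))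
              * B i.castSucc (Fin.last m)
              * det (B.submatrix (i.castSucc).succAbove (Fin.last m).succAbove) = 0 := by
          intro i
          have hi : (i : ℕ) < m := i.isLt
          have : B i.castSucc (Fin.last m) = 0 := by
            rw [hBapply]
            simp only [Fin.val_last, Fin.coe_castSucc]
            rw [if_neg (by omega)]
            simp only [Ent]
            rw [if_neg (by omega), if_neg (by omega), if_neg (by omega)]
          rw [this, mul_zero, zero_mul]
        rw [Finset.sum_eq_zero (fun i _ => hz2 i), zero_add]
        have h1 : B (Fin.last m) (Fin.last m) = -C (b (m + 1)) := by
          rw [hBapply]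
          simp only [Fin.val_last]
          rw [if_neg (by omega)]
          simp only [Ent]
          rw [if_neg (by omega)]; simp
        have h2 : B.submatrix (Fin.last m).succAbove (Fin.last m).succAbove = CM a b m := by
          ext i j
          simp only [Matrix.submatrix_apply, Fin.succAbove_last]
          rw [hBapply]
          simp only [Fin.coe_castSucc]
          rw [if_pos j.isLt]
          rfl
        rw [h1, h2, ihm]
        have : ((Fin.last m : ℕ) + (Fin.last m : ℕ)) = 2 * m := by simp; ring
        rw [this]
        have : (-1 : Polynomial ℝ) ^ (2 * m) = 1 := by
          rw [pow_mul]; simp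
        rw [this, one_mul]
      rw [hdiag, hoff, hdetB, hsub1, ihm1]
      have hsign1 : (-1 : Polynomial ℝ) ^
          ((Fin.last (m + 1) : ℕ) + ((Fin.castSucc (Fin.last m) : Fin (m+2)) : ℕ)) = -1 := by
        have : ((Fin.last (m + 1) : ℕ) + ((Fin.castSucc (Fin.last m) : Fin (m+2)) : ℕ)) =
            2 * m + 1 := by simp; ring
        rw [this, pow_succ, pow_mul]; simp
      have hsign2 : (-1 : Polynomial ℝ) ^
          ((Fin.last (m + 1) : ℕ) + ((Fin.last (m + 1) : Fin (m+2)) : ℕ)) = 1 := by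
        have : ((Fin.last (m + 1) : ℕ) + ((Fin.last (m + 1) : Fin (m+2)) : ℕ)) =
            2 * (m + 1) := by simp; ring
        rw [this, pow_mul]; simp
      rw [hsign1, hsign2, one_mul]
      rw [hprec (m + 1) (by omega)]
      simp only [Nat.add_sub_cancel]
      rw [map_pow]
      ring

theorem charpoly_jacobi_eq_orthopoly
    (n : ℕ) (hn : 1 ≤ n) (a b : ℕ → ℝ) (p : ℕ → Polynomial ℝ)
    (hp0 : p 0 = 1) (hp1 : p 1 = X - C (a 0))
    (hprec : ∀ k, 1 ≤ k →
      p (k + 1) = (X - C (a k)) * p k - C ((b k) ^ 2) * p (k - 1))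
    (J : Matrix (Fin n) (Fin n) ℝ)
    (hJ : ∀ i j : Fin n, J i j =
      if (i : ℕ) = (j : ℕ) then a i
      else if (i : ℕ) + 1 = (j : ℕ) then b j
      else if (j : ℕ) + 1 = (i : ℕ) then b i
      else 0) :
    J.charpoly = p n := by
  have hcm : charmatrix J = CM a b n := by
    ext i j : 2
    by_cases h : i = j
    · subst h
      rw [charmatrix_apply_eq, hJ]
      simp [CM, Ent]
    · have h' : (i : ℕ) ≠ (j : ℕ) := fun hc => h (Fin.ext hc)
      rw [charmatrix_apply_ne _ _ _ h, hJ]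
      simp only [CM, Matrix.of_apply, Ent, if_neg h']
      split_ifs <;> simp
  rw [Matrix.charpoly, hcm, detCM a b p hp0 hp1 hprec n]
end

section
/- Let n ≥ 1, let α : ℕ → ℝ and β : ℕ → ℝ, and let P : ℕ → ℝ[X] be polynomials with P 0 a nonzero constant polynomial, satisfying the three-term recurrence X·(P 0) = C(α 0)·P 0 + C(β 1)·P 1 and X·(P k) = C(β k)·P (k−1) + C(α k)·P k + C(β (k+1))·P (k+1) for all k ≥ 1. Let J(n) be the n×n real symmetric tridiagonal matrix with J k k = α k and J k (k+1) = J (k+1) k = β (k+1). If x₀ ∈ ℝ satisfies (P n).eval x₀ = 0, then the vector v ∈ ℝⁿ with components v k = (P k).eval x₀ (0 ≤ k < n) is nonzero and satisfies J(n).mulVec v = x₀ • v; hence every root of P n is an eigenvalue of the Jacobi matrix J(n). -/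
open Matrix Polynomial

theorem root_of_orthopoly_is_eigenvalue_of_jacobi
    (n : ℕ) (hn : 1 ≤ n) (α β : ℕ → ℝ) (P : ℕ → Polynomial ℝ)
    (hP0deg : (P 0).natDegree = 0) (hP0ne : P 0 ≠ 0)
    (hrec0 : X * P 0 = C (α 0) * P 0 + C (β 1) * P 1)
    (hrec : ∀ k, 1 ≤ k →
      X * P k = C (β k) * P (k - 1) + C (α k) * P k + C (β (k + 1)) * P (k + 1))
    (J : Matrix (Fin n) (Fin n) ℝ)
    (hJ : ∀ i j : Fin n, J i j =
      if (i : ℕ) = (j : ℕ) then α i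
      else if (i : ℕ) + 1 = (j : ℕ) then β j
      else if (j : ℕ) + 1 = (i : ℕ) then β i
      else 0)
    (x₀ : ℝ) (hx₀ : (P n).eval x₀ = 0)
    (v : Fin n → ℝ) (hv : ∀ k : Fin n, v k = (P (k : ℕ)).eval x₀) :
    v ≠ 0 ∧ J.mulVec v = x₀ • v := by
  set p : ℕ → ℝ := fun k => (P k).eval x₀ with hp
  have hp0 : p 0 ≠ 0 := by
    have hC : P 0 = C ((P 0).coeff 0) := Polynomial.eq_C_of_natDegree_eq_zero hP0deg
    have : (P 0).coeff 0 ≠ 0 := by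
      intro h
      apply hP0ne
      rw [hC, h, map_zero]
    show (P 0).eval x₀ ≠ 0
    rw [hC, eval_C]
    exact this
  have hrec' : ∀ k, x₀ * p k =
      (if k = 0 then 0 else β k * p (k - 1)) + α k * p k + β (k + 1) * p (k + 1) := by
    intro k
    cases k with
    | zero =>
      have := congrArg (Polynomial.eval x₀) hrec0
      simpa [hp] using this
    | succ m =>
      have := congrArg (Polynomial.eval x₀) (hrec (m + 1) (Nat.succ_le_succ (Nat.zero_le m)))
      simpa [hp] using this
  constructor
  · intro h
    apply hp0
    have := congrFun h ⟨0, hn⟩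
    rw [hv] at this
    simpa [hp] using this
  · funext i
    have key : ∀ j : Fin n, J i j * v j =
        (if j = i then α i * p i else 0) +
        ((if (i : ℕ) + 1 = (j : ℕ) then β j * p j else 0) +
         (if (j : ℕ) + 1 = (i : ℕ) then β i * p j else 0)) := by
      intro j
      rcases eq_or_ne j i with rfl | hji
      · simp [hJ, hv, hp]
      · have h1 : ¬ ((i : ℕ) = (j : ℕ)) := fun h => hji (Fin.ext h.symm)
        rw [hJ, hv, if_neg h1, if_neg hji]
        simp only [hp]
        split_ifs <;> first | omega | ring
    have S2 : (∑ j : Fin n, if (i : ℕ) + 1 = (j : ℕ) then β j * p j else 0)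
        = β ((i : ℕ) + 1) * p ((i : ℕ) + 1) := by
      by_cases hi : (i : ℕ) + 1 < n
      · have : (∑ j : Fin n, if (i : ℕ) + 1 = (j : ℕ) then β j * p j else 0)
            = ∑ j : Fin n, if j = (⟨(i : ℕ) + 1, hi⟩ : Fin n) then β j * p j else 0 := by
          apply Finset.sum_congr rfl
          intro j _
          congr 1
          simp only [Fin.ext_iff, eq_iff_iff]
          omega
        rw [this, Finset.sum_ite_eq' Finset.univ]
        simp
      · have hin : (i : ℕ) + 1 = n := by omega
        have hpn : p ((i : ℕ) + 1) = 0 := by rw [hin]; exact hx₀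
        rw [hpn, mul_zero]
        apply Finset.sum_eq_zero
        intro j _
        have : ¬ ((i : ℕ) + 1 = (j : ℕ)) := by have := j.isLt; omega
        simp [this]
    have S3 : (∑ j : Fin n, if (j : ℕ) + 1 = (i : ℕ) then β i * p j else 0)
        = (if (i : ℕ) = 0 then 0 else β i * p ((i : ℕ) - 1)) := by
      by_cases hi : (i : ℕ) = 0
      · simp only [hi, if_true]
        apply Finset.sum_eq_zero
        intro j _
        have : ¬ ((j : ℕ) + 1 = (0 : ℕ)) := by omega
        simp [hi, this]
      · have him : (i : ℕ) - 1 < n := by have := i.isLt; omega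
        have : (∑ j : Fin n, if (j : ℕ) + 1 = (i : ℕ) then β i * p j else 0)
            = ∑ j : Fin n, if j = (⟨(i : ℕ) - 1, him⟩ : Fin n) then β i * p j else 0 := by
          apply Finset.sum_congr rfl
          intro j _
          congr 1
          simp only [Fin.ext_iff, eq_iff_iff]
          constructor <;> intro h <;> omega
        rw [this, Finset.sum_ite_eq' Finset.univ]
        simp [hi]
    have hsum : J.mulVec v i = α i * p i + (β ((i : ℕ) + 1) * p ((i : ℕ) + 1) +
        (if (i : ℕ) = 0 then 0 else β i * p ((i : ℕ) - 1))) := by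
      simp only [mulVec, dotProduct]
      rw [Finset.sum_congr rfl (fun j _ => key j), Finset.sum_add_distrib,
        Finset.sum_add_distrib, S2, S3, Finset.sum_ite_eq' Finset.univ]
      simp
    rw [hsum, Pi.smul_apply, smul_eq_mul, hv]
    show _ = x₀ * p (i : ℕ)
    rw [hrec' (i : ℕ)]
    ring
end

section
/- For every n ≥ 1 the polynomial P n has n distinct real roots: there exist real numbers x_1 < x_2 < … < x_n such that P n = ∏_{i=1}^n (X − C(x_i)). -/
open Polynomial MeasureTheory

lemma intpoly (w : ℝ → ℝ) (hw_int : ∀ k : ℕ, Integrable (fun t => t ^ k * w t))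
    (Q : ℝ[X]) : Integrable (fun t => Q.eval t * w t) := by
  have : (fun t => Q.eval t * w t) = fun t =>
      ∑ i ∈ Finset.range (Q.natDegree + 1), Q.coeff i * (t ^ i * w t) := by
    funext t
    rw [Polynomial.eval_eq_sum_range, Finset.sum_mul]
    simp [mul_assoc]
  rw [this]
  exact integrable_finset_sum _ fun i _ => (hw_int i).const_mul _

lemma monic_pos_of_no_roots (r : ℝ[X]) (hm : r.Monic) (hr : ∀ t, r.eval t ≠ 0)
    (t : ℝ) : 0 < r.eval t := by
  by_contra hle
  push_neg at hle
  have hlt : r.eval t < 0 := lt_of_le_of_ne hle (hr t)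
  obtain ⟨b, hb⟩ : ∃ b, 0 < r.eval b := by
    rcases eq_or_lt_of_le (Nat.zero_le r.natDegree) with hd | hd
    · have : r = 1 := hm.natDegree_eq_zero.mp hd.symm
      exact ⟨0, by simp [this]⟩
    · have hdeg : 0 < r.degree := by
        rwa [Polynomial.natDegree_pos_iff_degree_pos] at hd
      have := Polynomial.tendsto_atTop_of_leadingCoeff_nonneg r hdeg
        (by rw [hm.leadingCoeff]; norm_num)
      obtain ⟨b, hb⟩ := (this.eventually_ge_atTop 1).exists
      exact ⟨b, lt_of_lt_of_le one_pos hb⟩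
  have hcont : ContinuousOn (fun x => r.eval x) (Set.uIcc t b) :=
    (Polynomial.continuous r).continuousOn
  have hmem : (0 : ℝ) ∈ Set.uIcc (r.eval t) (r.eval b) :=
    Set.mem_uIcc.mpr (Or.inl ⟨hlt.le, hb.le⟩)
  obtain ⟨c, _, hc⟩ := intermediate_value_uIcc hcont hmem
  exact hr c hc

lemma intpos (w : ℝ → ℝ) (hw_pos : ∀ x, 0 < w x)
    (hw_int : ∀ k : ℕ, Integrable (fun t => t ^ k * w t))
    (g : ℝ[X]) (hg : g ≠ 0) (hnn : ∀ t, 0 ≤ g.eval t) :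
    0 < ∫ t, g.eval t * w t := by
  rw [integral_pos_iff_support_of_nonneg
    (fun t => mul_nonneg (hnn t) (hw_pos t).le) (intpoly w hw_int g)]
  obtain ⟨t0, ht0⟩ : ∃ t0, g.eval t0 ≠ 0 := by
    by_contra hc
    push_neg at hc
    exact hg (Polynomial.funext fun x => by simp [hc x])
  have hopen : IsOpen {t : ℝ | g.eval t ≠ 0} :=
    isOpen_ne.preimage (Polynomial.continuous g)
  have hsub : {t : ℝ | g.eval t ≠ 0} ⊆ Function.support fun t => g.eval t * w t :=
    fun t ht => mul_ne_zero ht (hw_pos t).ne'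
  exact lt_of_lt_of_le (hopen.measure_pos volume ⟨t0, ht0⟩) (measure_mono hsub)

theorem orthopoly_has_distinct_real_roots
    (w : ℝ → ℝ) (hw_cont : Continuous w) (hw_pos : ∀ x, 0 < w x)
    (hw_int : ∀ k : ℕ, Integrable (fun t => t ^ k * w t))
    (P : ℕ → Polynomial ℝ)
    (hmonic : ∀ k, (P k).Monic) (hdeg : ∀ k, (P k).natDegree = k)
    (horth : ∀ j k, j ≠ k → ∫ t, (P j).eval t * (P k).eval t * w t = 0)
    (h : ℕ → ℝ) (hh : ∀ k, h k = ∫ t, ((P k).eval t) ^ 2 * w t) :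
    ∀ n, 1 ≤ n → ∃ x : Fin n → ℝ, StrictMono x ∧
      P n = ∏ i : Fin n, (X - C (x i)) := by
  classical
  intro n hn
  set p := P n with hpdef
  have hpm : p.Monic := hmonic n
  have hpd : p.natDegree = n := hdeg n
  have hp0 : p ≠ 0 := hpm.ne_zero
  -- orthogonality to all polynomials of degree < n
  have orth : ∀ d, d < n → ∀ Q : ℝ[X], Q.natDegree = d →
      ∫ t, Q.eval t * p.eval t * w t = 0 := by
    intro d
    induction d using Nat.strong_induction_on with
    | _ d IH =>
      intro hd Q hQd
      by_cases hQ0 : Q = 0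
      · simp [hQ0]
      set R := Q - C Q.leadingCoeff * P d with hR
      have key : (fun t => Q.eval t * p.eval t * w t)
          = fun t => Q.leadingCoeff * (((P d) * p).eval t * w t)
            + ((R * p).eval t * w t) := by
        funext t
        simp only [hR, Polynomial.eval_mul, Polynomial.eval_sub, Polynomial.eval_C]
        ring
      have hint1 : Integrable (fun t => ((P d) * p).eval t * w t) := intpoly w hw_int _
      have hint2 : Integrable (fun t => (R * p).eval t * w t) := intpoly w hw_int _
      have e1 : ∫ t, ((P d) * p).eval t * w t = 0 := by
        have := horth d n (Nat.ne_of_lt hd)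
        simpa [Polynomial.eval_mul, mul_assoc] using this
      have e2 : ∫ t, (R * p).eval t * w t = 0 := by
        by_cases hR0 : R = 0
        · simp [hR0]
        · have hlc : Q.leadingCoeff ≠ 0 := Polynomial.leadingCoeff_ne_zero.mpr hQ0
          have hdQ : Q.degree = (d : ℕ) := by
            rw [Polynomial.degree_eq_natDegree hQ0, hQd]
          have hdegeq : Q.degree = (C Q.leadingCoeff * P d).degree := by
            rw [Polynomial.degree_C_mul hlc,
              Polynomial.degree_eq_natDegree (hmonic d).ne_zero, hdeg d, hdQ]
          have hlceq : Q.leadingCoeff = (C Q.leadingCoeff * P d).leadingCoeff := by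
            rw [Polynomial.leadingCoeff_mul, Polynomial.leadingCoeff_C,
              (hmonic d).leadingCoeff, mul_one]
          have hdlt : R.degree < Q.degree := Polynomial.degree_sub_lt hdegeq hQ0 hlceq
          have hnd : R.natDegree < d := by
            have := Polynomial.natDegree_lt_natDegree hR0 hdlt
            omega
          have := IH R.natDegree hnd (hnd.trans hd) R rfl
          simpa [Polynomial.eval_mul, mul_assoc] using this
      rw [key, integral_add (hint1.const_mul _) hint2, MeasureTheory.integral_const_mul, e1, e2]
      ring
  -- the sign-change polynomial Q
  set s : Finset ℝ := p.roots.toFinset.filter (fun x => Odd (p.roots.count x)) with hs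
  set Q : ℝ[X] := ∏ x ∈ s, (X - C x) with hQdef
  have hQm : Q.Monic := monic_prod_of_monic _ _ fun x _ => monic_X_sub_C x
  have hQ0 : Q ≠ 0 := hQm.ne_zero
  have hQdeg : Q.natDegree = s.card := by
    rw [hQdef, Polynomial.natDegree_prod_of_monic _ _ fun x _ => monic_X_sub_C x]
    simp [Polynomial.natDegree_X_sub_C]
  -- factor p
  obtain ⟨r, hr⟩ := p.prod_multiset_X_sub_C_dvd
  set π : ℝ[X] := (p.roots.map fun a => X - C a).prod with hπdef
  have hπm : π.Monic := monic_multiset_prod_of_monic _ _ fun a _ => monic_X_sub_C a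
  have hrm : r.Monic := hπm.of_mul_monic_left (hr ▸ hpm)
  have hrroots : r.roots = 0 := by
    have h1 : p.roots = π.roots + r.roots := by
      rw [hr]; exact Polynomial.roots_mul (hr ▸ hp0)
    rw [hπdef, Polynomial.roots_multiset_prod_X_sub_C] at h1
    exact (left_eq_add.mp h1)
  have hrne : ∀ t, r.eval t ≠ 0 := by
    intro t ht
    have : t ∈ r.roots := by
      rw [Polynomial.mem_roots hrm.ne_zero]; exact ht
    rw [hrroots] at this
    exact absurd this (Multiset.notMem_zero t)
  have hrpos : ∀ t, 0 < r.eval t := monic_pos_of_no_roots r hrm hrne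
  -- nonnegativity of p * Q
  have hπfin : π = ∏ x ∈ p.roots.toFinset, (X - C x) ^ (p.roots.count x) :=
    Finset.prod_multiset_map_count _ _
  have hQ2 : Q = ∏ x ∈ p.roots.toFinset,
      (X - C x) ^ (if Odd (p.roots.count x) then 1 else 0) := by
    rw [hQdef, hs, Finset.prod_filter]
    exact Finset.prod_congr rfl fun x _ => by split <;> simp
  have hnn : ∀ t, 0 ≤ (p * Q).eval t := by
    intro t
    have hev : (p * Q).eval t = (π.eval t * Q.eval t) * r.eval t := by
      rw [hr]; simp only [Polynomial.eval_mul]; ring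
    have hprod : π.eval t * Q.eval t = ∏ x ∈ p.roots.toFinset,
        (t - x) ^ (p.roots.count x + if Odd (p.roots.count x) then 1 else 0) := by
      rw [hπfin, hQ2]
      simp only [Polynomial.eval_prod, Polynomial.eval_pow, Polynomial.eval_sub,
        Polynomial.eval_X, Polynomial.eval_C]
      rw [← Finset.prod_mul_distrib]
      exact Finset.prod_congr rfl fun x _ => (pow_add _ _ _).symm
    rw [hev, hprod]
    refine mul_nonneg (Finset.prod_nonneg fun x _ => ?_) (hrpos t).le
    have heven : Even (p.roots.count x + if Odd (p.roots.count x) then 1 else 0) := by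
      rcases Nat.even_or_odd (p.roots.count x) with he | ho
      · rw [if_neg (Nat.not_odd_iff_even.mpr he), add_zero]; exact he
      · rw [if_pos ho]; exact ho.add_one
    exact heven.pow_nonneg _
  have hpos : 0 < ∫ t, (p * Q).eval t * w t :=
    intpos w hw_pos hw_int _ (mul_ne_zero hp0 hQ0) hnn
  -- s must have exactly n elements
  have hge : n ≤ s.card := by
    by_contra hlt
    push_neg at hlt
    have h0 := orth s.card hlt Q hQdeg
    have : (0 : ℝ) < 0 := by
      calc (0 : ℝ) < ∫ t, (p * Q).eval t * w t := hpos
        _ = ∫ t, Q.eval t * p.eval t * w t := by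
            congr 1; funext t; simp only [Polynomial.eval_mul]; ring
        _ = 0 := h0
    exact lt_irrefl _ this
  have hsub : s ⊆ p.roots.toFinset := Finset.filter_subset _ _
  have hle1 : s.card ≤ p.roots.toFinset.card := Finset.card_le_card hsub
  have hle2 : p.roots.toFinset.card ≤ Multiset.card p.roots := Multiset.toFinset_card_le _
  have hle3 : Multiset.card p.roots ≤ n := hpd ▸ p.card_roots'
  have hscard : s.card = n := by omega
  have hseq : s = p.roots.toFinset := Finset.eq_of_subset_of_card_le hsub (by omega)
  have hcard : Multiset.card p.roots = n := by omega
  -- roots are distinct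
  have hnodup : p.roots.Nodup := by
    have hdc : Multiset.card p.roots.dedup = p.roots.toFinset.card := rfl
    have hd : p.roots.dedup = p.roots :=
      Multiset.eq_of_le_of_card_le (Multiset.dedup_le _) (by omega)
    rw [← hd]
    exact Multiset.nodup_dedup _
  have hfact : (p.roots.map fun a => X - C a).prod = p :=
    prod_multiset_X_sub_C_of_monic_of_roots_card_eq hpm (by rw [hpd]; exact hcard)
  have hval : p.roots.toFinset.val = p.roots := by
    rw [Multiset.toFinset_val]
    exact Multiset.dedup_eq_self.mpr hnodup
  have hfin : p = ∏ x ∈ s, (X - C x) := by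
    rw [hseq, Finset.prod_eq_multiset_prod, hval, hfact]
  let e := s.orderIsoOfFin hscard
  refine ⟨fun i => (e i : ℝ), fun i j hij => ?_, ?_⟩
  · exact Subtype.coe_lt_coe.mpr (e.strictMono hij)
  · rw [hfin, ← Finset.prod_coe_sort s (fun x => X - C (x : ℝ))]
    exact (Equiv.prod_comp e.toEquiv (fun y : s => X - C (y : ℝ))).symm
end

section
/- Let r ≥ 1, let w : ℝ → ℝ satisfy w x ≥ 0 for all x, let P : Fin r → ℝ[X] be monic polynomials with natDegree (P i) = i, and let h : Fin r → ℝ with h i > 0. Define ψ i x = (h i)^(−1/2) · (P i).eval x · √(w x) and K x y = ∑_{i : Fin r} ψ i x · ψ i y. Then for every x : Fin r → ℝ, det (K (x k) (x l))_{k,l ∈ Fin r} = (∏_i (h i)⁻¹) · (∏_{k < l} (x l − x k))² · ∏_k w (x k). -/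
open Polynomial Matrix Finset Real

theorem kernel_det_eq_vandermonde_sq_weight
    (r : ℕ) (hr : 1 ≤ r) (w : ℝ → ℝ) (hw : ∀ x, 0 ≤ w x)
    (P : Fin r → Polynomial ℝ) (hmonic : ∀ i, (P i).Monic)
    (hdeg : ∀ i, (P i).natDegree = (i : ℕ))
    (h : Fin r → ℝ) (hpos : ∀ i, 0 < h i)
    (ψ : Fin r → ℝ → ℝ)
    (hψ : ∀ i x, ψ i x = (h i) ^ (-(1 : ℝ) / 2) * (P i).eval x * Real.sqrt (w x))
    (K : ℝ → ℝ → ℝ) (hK : ∀ x y, K x y = ∑ i, ψ i x * ψ i y) :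
    ∀ x : Fin r → ℝ,
      Matrix.det (Matrix.of fun k l => K (x k) (x l)) =
        (∏ i, (h i)⁻¹) * (∏ k, ∏ l ∈ Finset.Ioi k, (x l - x k)) ^ 2 *
          ∏ k, w (x k) := by
  intro x
  set A : Matrix (Fin r) (Fin r) ℝ := Matrix.of fun k i => ψ i (x k) with hA
  have hKA : (Matrix.of fun k l => K (x k) (x l)) = A * Aᵀ := by
    ext k l
    simp [hK, Matrix.mul_apply, hA]
  -- factor A as diag(√w) * vandermonde-like * diag(c)
  have hdetA : A.det = (∏ k, Real.sqrt (w (x k))) *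
      ((∏ k, ∏ l ∈ Finset.Ioi k, (x l - x k)) * ∏ i, (h i) ^ (-(1:ℝ)/2)) := by
    have hfac : A = (Matrix.diagonal fun k => Real.sqrt (w (x k))) *
        ((Matrix.of fun k i => (P i).eval (x k)) *
          Matrix.diagonal (fun i => (h i) ^ (-(1:ℝ)/2))) := by
      ext k i
      simp [hA, hψ, Matrix.mul_apply, Matrix.diagonal, Matrix.of_apply,
        Finset.mul_sum, mul_comm, mul_left_comm]
    rw [hfac, Matrix.det_mul, Matrix.det_mul, Matrix.det_diagonal, Matrix.det_diagonal,
      ← Matrix.det_eval_matrixOfPolynomials_eq_det_vandermonde x P hdeg hmonic,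
      Matrix.det_vandermonde]
  rw [hKA, Matrix.det_mul, Matrix.det_transpose, ← sq, hdetA]
  have h1 : (∏ k, Real.sqrt (w (x k))) ^ 2 = ∏ k, w (x k) := by
    rw [← Finset.prod_pow]
    exact Finset.prod_congr rfl fun k _ => Real.sq_sqrt (hw (x k))
  have h2 : (∏ i, (h i) ^ (-(1:ℝ)/2)) ^ 2 = ∏ i, (h i)⁻¹ := by
    rw [← Finset.prod_pow]
    refine Finset.prod_congr rfl fun i _ => ?_
    rw [← Real.rpow_natCast ((h i) ^ (-(1:ℝ)/2)) 2, ← Real.rpow_mul (hpos i).le]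
    norm_num [Real.rpow_neg_one]
  rw [mul_pow, mul_pow, h1, h2]
  ring
end

section
/- Let m be a natural number and x : Fin m → ℝ. For t ∈ ℝ let x̂ : Fin (m+1) → ℝ be the extension of x with last value t. Then ∫_ℝ det (K (x̂ k) (x̂ l))_{k,l ∈ Fin (m+1)} dt = ((r : ℝ) − m) · det (K (x k) (x l))_{k,l ∈ Fin m}. -/
open MeasureTheory Matrix

theorem Ktt_integrable (r : ℕ) (ψ : Fin r → ℝ → ℝ)
    (hint : ∀ i j, Integrable (fun t => ψ i t * ψ j t))
    (K : ℝ → ℝ → ℝ) (hK : ∀ x y, K x y = ∑ i, ψ i x * ψ i y) :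
    Integrable (fun t => K t t) := by
  have h : (fun t => K t t) = fun t => ∑ i, ψ i t * ψ i t := funext fun t => hK t t
  rw [h]
  exact integrable_finset_sum _ fun i _ => hint i i

theorem Ktt_integral (r : ℕ) (ψ : Fin r → ℝ → ℝ)
    (hint : ∀ i j, Integrable (fun t => ψ i t * ψ j t))
    (horth : ∀ i j, ∫ t, ψ i t * ψ j t = if i = j then (1 : ℝ) else 0)
    (K : ℝ → ℝ → ℝ) (hK : ∀ x y, K x y = ∑ i, ψ i x * ψ i y) :
    ∫ t, K t t = (r : ℝ) := by
  have h : (fun t => K t t) = fun t => ∑ i, ψ i t * ψ i t := funext fun t => hK t t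
  rw [h, integral_finset_sum _ fun i _ => hint i i]
  simp [horth]

theorem KK_expand (r : ℕ) (ψ : Fin r → ℝ → ℝ)
    (K : ℝ → ℝ → ℝ) (hK : ∀ x y, K x y = ∑ i, ψ i x * ψ i y) (u v : ℝ) :
    (fun t => K u t * K t v) =
      fun t => ∑ i, ∑ j, (ψ i u * ψ j v) * (ψ i t * ψ j t) := by
  funext t
  rw [hK, hK, Finset.sum_mul_sum]
  exact Finset.sum_congr rfl fun i _ => Finset.sum_congr rfl fun j _ => by ring

theorem KK_integrable (r : ℕ) (ψ : Fin r → ℝ → ℝ)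
    (hint : ∀ i j, Integrable (fun t => ψ i t * ψ j t))
    (K : ℝ → ℝ → ℝ) (hK : ∀ x y, K x y = ∑ i, ψ i x * ψ i y) (u v : ℝ) :
    Integrable (fun t => K u t * K t v) := by
  rw [KK_expand r ψ K hK u v]
  exact integrable_finset_sum _ fun i _ =>
    integrable_finset_sum _ fun j _ => (hint i j).const_mul _

theorem KK_integral (r : ℕ) (ψ : Fin r → ℝ → ℝ)
    (hint : ∀ i j, Integrable (fun t => ψ i t * ψ j t))
    (horth : ∀ i j, ∫ t, ψ i t * ψ j t = if i = j then (1 : ℝ) else 0)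
    (K : ℝ → ℝ → ℝ) (hK : ∀ x y, K x y = ∑ i, ψ i x * ψ i y) (u v : ℝ) :
    ∫ t, K u t * K t v = K u v := by
  rw [KK_expand r ψ K hK u v,
    integral_finset_sum _ fun i _ =>
      integrable_finset_sum _ fun j _ => (hint i j).const_mul _]
  have h1 : ∀ i : Fin r, ∫ t, ∑ j, (ψ i u * ψ j v) * (ψ i t * ψ j t)
      = ∑ j, (ψ i u * ψ j v) * ∫ t, ψ i t * ψ j t := by
    intro i
    rw [integral_finset_sum _ fun j _ => (hint i j).const_mul _]
    exact Finset.sum_congr rfl fun j _ => integral_const_mul _ _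
  simp only [h1, horth, mul_ite, mul_one, mul_zero]
  rw [hK u v]
  simp
open MeasureTheory Matrix

theorem key_cons (r : ℕ) (ψ : Fin r → ℝ → ℝ)
    (hint : ∀ i j, Integrable (fun t => ψ i t * ψ j t))
    (horth : ∀ i j, ∫ t, ψ i t * ψ j t = if i = j then (1 : ℝ) else 0)
    (K : ℝ → ℝ → ℝ) (hK : ∀ x y, K x y = ∑ i, ψ i x * ψ i y)
    (m : ℕ) (x : Fin m → ℝ) :
    ∫ t : ℝ, Matrix.det (Matrix.of fun k l : Fin (m + 1) =>
        K ((Fin.cons t x : Fin (m + 1) → ℝ) k) ((Fin.cons t x : Fin (m + 1) → ℝ) l)) =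
      ((r : ℝ) - (m : ℝ)) * Matrix.det (Matrix.of fun k l : Fin m => K (x k) (x l)) := by
  classical
  -- the sign-weighted product for the small determinant
  set G : Equiv.Perm (Fin m) → ℝ :=
    fun e => ((Equiv.Perm.sign e : ℤ) : ℝ) * ∏ j, K (x (e j)) (x j) with hGdef
  have hDG : Matrix.det (Matrix.of fun k l : Fin m => K (x k) (x l)) = ∑ e, G e := by
    rw [Matrix.det_apply']
    exact Finset.sum_congr rfl fun e _ => rfl
  -- terms of the big determinant, indexed by pairs
  set f : Fin (m + 1) × Equiv.Perm (Fin m) → ℝ → ℝ := fun pe t =>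
    ((Equiv.Perm.sign (Equiv.Perm.decomposeFin.symm pe) : ℤ) : ℝ) *
      ∏ i, K ((Fin.cons t x : Fin (m + 1) → ℝ) (Equiv.Perm.decomposeFin.symm pe i))
        ((Fin.cons t x : Fin (m + 1) → ℝ) i) with hfdef
  have hdet : ∀ t : ℝ, Matrix.det (Matrix.of fun k l : Fin (m + 1) =>
      K ((Fin.cons t x : Fin (m + 1) → ℝ) k) ((Fin.cons t x : Fin (m + 1) → ℝ) l))
      = ∑ pe : Fin (m + 1) × Equiv.Perm (Fin m), f pe t := by
    intro t
    rw [Matrix.det_apply']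
    exact (Equiv.sum_comp Equiv.Perm.decomposeFin.symm
      (fun σ => ((Equiv.Perm.sign σ : ℤ) : ℝ) *
        ∏ i, K ((Fin.cons t x : Fin (m + 1) → ℝ) (σ i)) ((Fin.cons t x : Fin (m + 1) → ℝ) i))).symm
  -- the case p = 0
  have L1 : ∀ e : Equiv.Perm (Fin m),
      (fun t => f ((0 : Fin (m + 1)), e) t) = fun t => G e * K t t := by
    intro e
    funext t
    have h0 : (Equiv.Perm.decomposeFin.symm ((0 : Fin (m + 1)), e)) 0 = 0 :=
      Equiv.Perm.decomposeFin_symm_apply_zero 0 e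
    have hs : ∀ j : Fin m,
        (Equiv.Perm.decomposeFin.symm ((0 : Fin (m + 1)), e)) j.succ = (e j).succ := by
      intro j
      rw [Equiv.Perm.decomposeFin_symm_apply_succ, Equiv.swap_self]
      rfl
    have hsign : ((Equiv.Perm.sign (Equiv.Perm.decomposeFin.symm ((0 : Fin (m + 1)), e)) : ℤ) : ℝ)
        = ((Equiv.Perm.sign e : ℤ) : ℝ) := by
      rw [Equiv.Perm.decomposeFin.symm_sign, if_pos rfl, one_mul]
    simp only [hfdef, hGdef]
    rw [Fin.prod_univ_succ]
    simp only [h0, hs, Fin.cons_zero, Fin.cons_succ, hsign]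
    ring
  -- the case p = q.succ
  have L2 : ∀ (q : Fin m) (e : Equiv.Perm (Fin m)),
      (fun t => f (q.succ, e) t) =
        fun t => (-((Equiv.Perm.sign e : ℤ) : ℝ) *
            ∏ j ∈ Finset.univ.erase (e⁻¹ q), K (x (e j)) (x j)) *
          (K (x q) t * K t (x (e⁻¹ q))) := by
    intro q e
    funext t
    set b : Fin m := e⁻¹ q with hbdef
    have heb : e b = q := e.apply_symm_apply q
    have h0 : (Equiv.Perm.decomposeFin.symm (q.succ, e)) 0 = q.succ :=
      Equiv.Perm.decomposeFin_symm_apply_zero q.succ e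
    have hsb : (Equiv.Perm.decomposeFin.symm (q.succ, e)) b.succ = 0 := by
      rw [Equiv.Perm.decomposeFin_symm_apply_succ, heb, Equiv.swap_apply_right]
    have hs : ∀ j : Fin m, j ≠ b →
        (Equiv.Perm.decomposeFin.symm (q.succ, e)) j.succ = (e j).succ := by
      intro j hj
      rw [Equiv.Perm.decomposeFin_symm_apply_succ]
      refine Equiv.swap_apply_of_ne_of_ne (Fin.succ_ne_zero _) ?_
      simp only [Ne, Fin.succ_inj]
      intro h
      exact hj (by rw [hbdef, ← h, Equiv.Perm.inv_def, Equiv.symm_apply_apply])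
    have hsign : ((Equiv.Perm.sign (Equiv.Perm.decomposeFin.symm (q.succ, e)) : ℤ) : ℝ)
        = -((Equiv.Perm.sign e : ℤ) : ℝ) := by
      rw [Equiv.Perm.decomposeFin.symm_sign, if_neg (Fin.succ_ne_zero q)]
      push_cast
      ring
    simp only [hfdef]
    rw [Fin.prod_univ_succ,
      ← Finset.mul_prod_erase Finset.univ
        (fun j => K ((Fin.cons t x : Fin (m + 1) → ℝ) ((Equiv.Perm.decomposeFin.symm (q.succ, e)) j.succ))
          ((Fin.cons t x : Fin (m + 1) → ℝ) j.succ)) (Finset.mem_univ b)]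
    rw [Finset.prod_congr rfl (fun j hj => by
      rw [hs j (Finset.ne_of_mem_erase hj)])]
    simp only [h0, hsb, Fin.cons_zero, Fin.cons_succ, hsign]
    ring
  -- integrability of each term
  have hI : ∀ pe : Fin (m + 1) × Equiv.Perm (Fin m), Integrable (fun t => f pe t) := by
    rintro ⟨p, e⟩
    refine Fin.cases ?_ ?_ p
    · rw [L1 e]
      exact (Ktt_integrable r ψ hint K hK).const_mul _
    · intro q
      rw [L2 q e]
      exact (KK_integrable r ψ hint K hK _ _).const_mul _
  -- value of each term's integral
  have hInt : ∀ (p : Fin (m + 1)) (e : Equiv.Perm (Fin m)),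
      ∫ t, f (p, e) t = if p = 0 then (r : ℝ) * G e else -G e := by
    intro p e
    refine Fin.cases ?_ ?_ p
    · rw [L1 e, if_pos rfl, integral_const_mul, Ktt_integral r ψ hint horth K hK, mul_comm]
    · intro q
      rw [L2 q e, if_neg (Fin.succ_ne_zero q), integral_const_mul,
        KK_integral r ψ hint horth K hK _ _]
      have hsplit : ∏ j, K (x (e j)) (x j)
          = K (x (e (e⁻¹ q))) (x (e⁻¹ q)) * ∏ j ∈ Finset.univ.erase (e⁻¹ q), K (x (e j)) (x j) :=
        (Finset.mul_prod_erase Finset.univ _ (Finset.mem_univ _)).symm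
      simp only [hGdef, hsplit, Equiv.Perm.inv_def, Equiv.apply_symm_apply]
      ring
  -- assemble
  calc ∫ t : ℝ, Matrix.det (Matrix.of fun k l : Fin (m + 1) =>
        K ((Fin.cons t x : Fin (m + 1) → ℝ) k) ((Fin.cons t x : Fin (m + 1) → ℝ) l))
      = ∫ t : ℝ, ∑ pe : Fin (m + 1) × Equiv.Perm (Fin m), f pe t := by
        simp_rw [hdet]
    _ = ∑ pe : Fin (m + 1) × Equiv.Perm (Fin m), ∫ t, f pe t :=
        integral_finset_sum _ fun pe _ => hI pe
    _ = ∑ p : Fin (m + 1), ∑ e : Equiv.Perm (Fin m),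
          if p = 0 then (r : ℝ) * G e else -G e := by
        rw [Fintype.sum_prod_type]
        exact Finset.sum_congr rfl fun p _ => Finset.sum_congr rfl fun e _ => hInt p e
    _ = (∑ e : Equiv.Perm (Fin m), (r : ℝ) * G e)
          + ∑ q : Fin m, ∑ e : Equiv.Perm (Fin m), -G e := by
        rw [Fin.sum_univ_succ]
        simp [Fin.succ_ne_zero]
    _ = ((r : ℝ) - (m : ℝ)) * ∑ e, G e := by
        rw [← Finset.mul_sum]
        simp only [Finset.sum_neg_distrib, Finset.sum_const, Finset.card_univ,
          Fintype.card_fin, nsmul_eq_mul]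
        ring
    _ = ((r : ℝ) - (m : ℝ)) * Matrix.det (Matrix.of fun k l : Fin m => K (x k) (x l)) := by
        rw [hDG]

theorem integral_det_kernel_snoc
    (r : ℕ) (hr : 1 ≤ r) (ψ : Fin r → ℝ → ℝ)
    (hmeas : ∀ i, Measurable (ψ i))
    (hint : ∀ i j, Integrable (fun t => ψ i t * ψ j t))
    (horth : ∀ i j, ∫ t, ψ i t * ψ j t = if i = j then (1 : ℝ) else 0)
    (K : ℝ → ℝ → ℝ) (hK : ∀ x y, K x y = ∑ i, ψ i x * ψ i y)
    (m : ℕ) (x : Fin m → ℝ) :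
    ∫ t : ℝ,
        Matrix.det (Matrix.of fun k l : Fin (m + 1) =>
          K ((Fin.snoc x t : Fin (m + 1) → ℝ) k) ((Fin.snoc x t : Fin (m + 1) → ℝ) l)) =
      ((r : ℝ) - (m : ℝ)) *
        Matrix.det (Matrix.of fun k l : Fin m => K (x k) (x l)) := by
  have hmat : ∀ t : ℝ,
      Matrix.det (Matrix.of fun k l : Fin (m + 1) =>
        K ((Fin.snoc x t : Fin (m + 1) → ℝ) k) ((Fin.snoc x t : Fin (m + 1) → ℝ) l))
      = Matrix.det (Matrix.of fun k l : Fin (m + 1) =>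
        K ((Fin.cons t x : Fin (m + 1) → ℝ) k) ((Fin.cons t x : Fin (m + 1) → ℝ) l)) := by
    intro t
    have hsnoc : (Fin.snoc x t : Fin (m + 1) → ℝ)
        = fun i => (Fin.cons t x : Fin (m + 1) → ℝ) (finRotate (m + 1) i) :=
      Fin.snoc_eq_cons_rotate x t
    rw [show (Matrix.of fun k l : Fin (m + 1) =>
        K ((Fin.snoc x t : Fin (m + 1) → ℝ) k) ((Fin.snoc x t : Fin (m + 1) → ℝ) l))
      = (Matrix.of fun k l : Fin (m + 1) =>
          K ((Fin.cons t x : Fin (m + 1) → ℝ) k)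
            ((Fin.cons t x : Fin (m + 1) → ℝ) l)).submatrix
          (finRotate (m + 1)) (finRotate (m + 1)) from by
        ext k l
        simp [hsnoc, Matrix.submatrix_apply]]
    exact Matrix.det_submatrix_equiv_self _ _
  simp_rw [hmat]
  exact key_cons r ψ hint horth K hK m x
end

section
/- Let m ≤ r and x : Fin m → ℝ. Then the integral over y : Fin (r−m) → ℝ, with respect to (r−m)-dimensional Lebesgue measure, of det (K (z k) (z l))_{k,l ∈ Fin r} — where z : Fin r → ℝ is the concatenation of x and y — equals (r − m)! · det (K (x k) (x l))_{k,l ∈ Fin m}. Equivalently, the m-point correlation function R_{m,r}(x_1,…,x_m) = (r!/(r−m)!) ∫_{ℝ^{r−m}} (1/r!) det(K(z_k,z_l))_{r×r} dx_{m+1}…dx_r equals det(K(x_k, x_ℓ))_{k,ℓ=1}^m. -/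
open MeasureTheory Matrix Equiv Function

set_option linter.unusedSectionVars false
set_option linter.unusedVariables false
set_option maxHeartbeats 1000000

section auxiliary
variable {α β γ : Type*} [Fintype α] [Fintype β] [Fintype γ]
  [DecidableEq α] [DecidableEq β] [DecidableEq γ]

variable {α β γ : Type*} [Fintype α] [Fintype β] [Fintype γ]
  [DecidableEq α] [DecidableEq β] [DecidableEq γ]

private lemma sum_perm_fix_inr (F : Equiv.Perm (α ⊕ β) → ℝ)
    (hF : ∀ w : Equiv.Perm (α ⊕ β), (∃ j, w (Sum.inr j) ≠ Sum.inr j) → F w = 0) :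
    ∑ w : Equiv.Perm (α ⊕ β), F w
      = ∑ ρ : Equiv.Perm α, F (Equiv.sumCongr ρ (Equiv.refl β)) := by
  classical
  rw [← Finset.sum_filter_of_ne
      (p := fun w : Equiv.Perm (α ⊕ β) => ∀ j, w (Sum.inr j) = Sum.inr j)
      (fun w _ hw => by
        by_contra h
        rw [not_forall] at h
        exact hw (hF w (h.imp fun j hj => hj)))]
  refine (Finset.sum_bij (fun (ρ : Equiv.Perm α) _ => Equiv.sumCongr ρ (Equiv.refl β))
      ?_ ?_ ?_ ?_).symm
  · intro ρ _
    simp [Finset.mem_filter]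
  · intro ρ₁ _ ρ₂ _ h
    ext a
    have := congrArg (fun (w : Equiv.Perm (α ⊕ β)) => w (Sum.inl a)) h
    simpa using this
  · intro w hw
    simp only [Finset.mem_filter, Finset.mem_univ, true_and] at hw
    have hmap : Set.MapsTo w (Set.range Sum.inl) (Set.range Sum.inl) := by
      rintro x ⟨a, rfl⟩
      rcases h : w (Sum.inl a) with b | b
      · exact ⟨b, rfl⟩
      · exfalso
        have : w (Sum.inr b) = Sum.inr b := hw b
        have := w.injective (h.trans this.symm)
        simp at this
    obtain ⟨⟨ρ, μ⟩, hρμ⟩ := Equiv.Perm.mem_sumCongrHom_range_of_perm_mapsTo_inl hmap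
    have hμ : μ = Equiv.refl β := by
      ext j
      have := hw j
      rw [← hρμ] at this
      simpa [Equiv.Perm.sumCongrHom] using this
    refine ⟨ρ, Finset.mem_univ _, ?_⟩
    rw [← hρμ, hμ]
    rfl
  · intro ρ _
    rfl

private lemma card_perm_fix_inl :
    (Finset.univ.filter
        (fun w : Equiv.Perm (α ⊕ β) => ∀ a, w (Sum.inl a) = Sum.inl a)).card
      = (Fintype.card β).factorial := by
  classical
  rw [← Fintype.card_perm, ← Finset.card_univ]
  refine (Finset.card_bij (fun (μ : Equiv.Perm β) _ => Equiv.sumCongr (Equiv.refl α) μ)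
      ?_ ?_ ?_).symm
  · intro μ _
    simp [Finset.mem_filter]
  · intro μ₁ _ μ₂ _ h
    ext b
    have := congrArg (fun (w : Equiv.Perm (α ⊕ β)) => w (Sum.inr b)) h
    simpa using this
  · intro w hw
    simp only [Finset.mem_filter, Finset.mem_univ, true_and] at hw
    have hmap : Set.MapsTo w (Set.range Sum.inl) (Set.range Sum.inl) := by
      rintro x ⟨a, rfl⟩
      exact ⟨a, (hw a).symm⟩
    obtain ⟨⟨ρ, μ⟩, hρμ⟩ := Equiv.Perm.mem_sumCongrHom_range_of_perm_mapsTo_inl hmap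
    have hρ : ρ = Equiv.refl α := by
      ext a
      have := hw a
      rw [← hρμ] at this
      simpa [Equiv.Perm.sumCongrHom] using this
    refine ⟨μ, Finset.mem_univ _, ?_⟩
    rw [← hρμ, hρ]
    rfl

private lemma exists_perm_extend (e : α ⊕ β ≃ γ) (f : α → γ) (hf : Function.Injective f) :
    ∃ σ : Equiv.Perm γ, ∀ a, σ (e (Sum.inl a)) = f a := by
  classical
  have hcard : Fintype.card α + Fintype.card β = Fintype.card γ := by
    simpa [Fintype.card_sum] using Fintype.card_congr e
  set t : Finset γ := Finset.univ \ Finset.univ.image f with ht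
  have htcard : Fintype.card β = Fintype.card { x // x ∈ t } := by
    rw [Fintype.card_coe, ht, Finset.card_sdiff_of_subset (Finset.subset_univ _),
      Finset.card_image_of_injective _ hf, Finset.card_univ, Finset.card_univ]
    omega
  obtain ⟨g⟩ := Fintype.card_eq.mp htcard
  set F : α ⊕ β → γ := Sum.elim f (fun b => (g b : γ)) with hF
  have hinj : Function.Injective F := by
    rintro (a₁ | b₁) (a₂ | b₂) h <;> simp only [hF, Sum.elim_inl, Sum.elim_inr] at h
    · exact congrArg Sum.inl (hf h)
    · exfalso
      have := (g b₂).2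
      rw [← h, ht] at this
      simp at this
    · exfalso
      have := (g b₁).2
      rw [h, ht] at this
      simp at this
    · exact congrArg Sum.inr (g.injective (Subtype.ext h))
  have hbij : Function.Bijective F :=
    (Fintype.bijective_iff_injective_and_card F).mpr ⟨hinj, by simp [Fintype.card_sum, hcard]⟩
  refine ⟨e.symm.trans (Equiv.ofBijective F hbij), fun a => ?_⟩
  simp [Equiv.ofBijective, hF]

private lemma sum_perm_comp (e : α ⊕ β ≃ γ) (G : (α → γ) → ℝ) :
    ∑ σ : Equiv.Perm γ, G (fun a => σ (e (Sum.inl a)))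
      = ((Fintype.card β).factorial : ℝ) *
        ∑ f ∈ Finset.univ.filter (fun f : α → γ => Function.Injective f), G f := by
  classical
  rw [Finset.sum_comp G (fun σ : Equiv.Perm γ => fun a => σ (e (Sum.inl a)))]
  have himg : (Finset.univ : Finset (Equiv.Perm γ)).image
        (fun σ : Equiv.Perm γ => fun a => σ (e (Sum.inl a)))
      = Finset.univ.filter (fun f : α → γ => Function.Injective f) := by
    ext f
    simp only [Finset.mem_image, Finset.mem_filter, Finset.mem_univ, true_and]
    constructor
    · rintro ⟨σ, rfl⟩
      exact fun a b hab => Sum.inl_injective (e.injective (σ.injective hab))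
    · intro hf
      obtain ⟨σ, hσ⟩ := exists_perm_extend e f hf
      exact ⟨σ, funext hσ⟩
  rw [himg, Finset.mul_sum]
  refine Finset.sum_congr rfl fun f hf => ?_
  simp only [Finset.mem_filter, Finset.mem_univ, true_and] at hf
  obtain ⟨σ₀, hσ₀⟩ := exists_perm_extend e f hf
  have hcard : (Finset.univ.filter
        (fun σ : Equiv.Perm γ => (fun a => σ (e (Sum.inl a))) = f)).card
      = (Fintype.card β).factorial := by
    rw [← card_perm_fix_inl (α := α) (β := β)]
    refine Finset.card_bij
      (fun (σ : Equiv.Perm γ) _ => (e.permCongr).symm (σ₀⁻¹ * σ)) ?_ ?_ ?_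
    · intro σ hσ
      simp only [Finset.mem_filter, Finset.mem_univ, true_and] at hσ ⊢
      intro a
      have h1 : σ (e (Sum.inl a)) = f a := congrFun hσ a
      have h2 : σ₀⁻¹ (f a) = e (Sum.inl a) := by
        rw [← hσ₀ a]; exact σ₀.symm_apply_apply _
      simp [Equiv.permCongr_symm, Equiv.permCongr_apply, Equiv.Perm.mul_apply, h1, h2]
    · intro σ₁ h₁ σ₂ h₂ h
      have := (e.permCongr).symm.injective h
      exact mul_left_cancel this
    · intro w hw
      simp only [Finset.mem_filter, Finset.mem_univ, true_and] at hw
      refine ⟨σ₀ * e.permCongr w, ?_, ?_⟩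
      · simp only [Finset.mem_filter, Finset.mem_univ, true_and]
        funext a
        simp [Equiv.Perm.mul_apply, Equiv.permCongr_apply, hw a, hσ₀ a]
      · simp only [Equiv.permCongr_symm, inv_mul_cancel_left]
        ext s
        simp [Equiv.permCongr_apply]
  rw [hcard]
  simp [mul_comm]

variable {α γ : Type*} [Fintype α] [Fintype γ] [DecidableEq α] [DecidableEq γ]

private lemma sum_filter_inj_eq_sum_univ (A B : α → γ → ℝ) :
    ∑ ρ : Equiv.Perm α, ((Equiv.Perm.sign ρ : ℤ) : ℝ) *
        ∑ f ∈ Finset.univ.filter (fun f : α → γ => Function.Injective f),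
          ∏ k, (A k (f k) * B (ρ k) (f k))
      = ∑ ρ : Equiv.Perm α, ((Equiv.Perm.sign ρ : ℤ) : ℝ) *
          ∑ f : α → γ, ∏ k, (A k (f k) * B (ρ k) (f k)) := by
  classical
  have swap : ∀ (s : Finset (α → γ)),
      ∑ ρ : Equiv.Perm α, ((Equiv.Perm.sign ρ : ℤ) : ℝ) *
          ∑ f ∈ s, ∏ k, (A k (f k) * B (ρ k) (f k))
        = ∑ f ∈ s, ∑ ρ : Equiv.Perm α, ((Equiv.Perm.sign ρ : ℤ) : ℝ) *
            ∏ k, (A k (f k) * B (ρ k) (f k)) := by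
    intro s
    simp_rw [Finset.mul_sum]
    rw [Finset.sum_comm]
  have key : ∀ f : α → γ, ¬ Function.Injective f →
      ∑ ρ : Equiv.Perm α, ((Equiv.Perm.sign ρ : ℤ) : ℝ) *
          ∏ k, (A k (f k) * B (ρ k) (f k)) = 0 := by
    intro f hf
    simp_rw [Finset.prod_mul_distrib]
    have hre : ∀ ρ : Equiv.Perm α,
        ((Equiv.Perm.sign ρ : ℤ) : ℝ) * ((∏ k, A k (f k)) * ∏ k, B (ρ k) (f k))
          = (∏ k, A k (f k)) * (((Equiv.Perm.sign ρ : ℤ) : ℝ) * ∏ k, B (ρ k) (f k)) :=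
      fun ρ => by ring
    simp_rw [hre, ← Finset.mul_sum]
    have hdet : ∑ ρ : Equiv.Perm α, ((Equiv.Perm.sign ρ : ℤ) : ℝ) *
        ∏ k, B (ρ k) (f k) = (Matrix.of fun i k => B i (f k)).det := by
      rw [Matrix.det_apply']
      rfl
    rw [hdet]
    obtain ⟨a, b, hab, hne⟩ := Function.not_injective_iff.mp hf
    rw [Matrix.det_zero_of_column_eq hne (fun i => by simp [hab]), mul_zero]
  rw [swap, swap]
  symm
  rw [← Finset.sum_filter_add_sum_filter_not Finset.univ
    (fun f : α → γ => Function.Injective f)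
    (fun f => ∑ ρ : Equiv.Perm α, ((Equiv.Perm.sign ρ : ℤ) : ℝ) *
      ∏ k, (A k (f k) * B (ρ k) (f k)))]
  rw [Finset.sum_eq_zero (fun f hf => key f (Finset.mem_filter.mp hf).2), add_zero]

end auxiliary

section comb
variable {m N r : ℕ}

private lemma combinatorial_step (e : Fin m ⊕ Fin N ≃ Fin r)
    (ψ : Fin r → ℝ → ℝ) (x : Fin m → ℝ) :
    ∑ σ : Equiv.Perm (Fin r), ∑ τ : Equiv.Perm (Fin r),
      (((Equiv.Perm.sign σ : ℤ) : ℝ) * ((Equiv.Perm.sign τ : ℤ) : ℝ)) *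
        ((∏ k : Fin m, (ψ (σ (e (Sum.inl k))) (x k) * ψ (τ (e (Sum.inl k))) (x k))) *
          (∏ j : Fin N, (if σ (e (Sum.inr j)) = τ (e (Sum.inr j)) then (1 : ℝ) else 0)))
      = (N.factorial : ℝ) * ∑ ρ : Equiv.Perm (Fin m), ((Equiv.Perm.sign ρ : ℤ) : ℝ) *
          ∑ f : Fin m → Fin r, ∏ k : Fin m, (ψ (f k) (x k) * ψ (f k) (x (ρ k))) := by
  classical
  have hsq : ∀ σ : Equiv.Perm (Fin r),
      ((Equiv.Perm.sign σ : ℤ) : ℝ) * ((Equiv.Perm.sign σ : ℤ) : ℝ) = 1 := by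
    intro σ
    rcases Int.units_eq_one_or (Equiv.Perm.sign σ) with h | h <;> simp [h]
  -- Step 1 : reindex τ = σ * w and kill sign σ
  have step1 : ∀ σ : Equiv.Perm (Fin r),
      (∑ τ : Equiv.Perm (Fin r),
        (((Equiv.Perm.sign σ : ℤ) : ℝ) * ((Equiv.Perm.sign τ : ℤ) : ℝ)) *
          ((∏ k : Fin m, (ψ (σ (e (Sum.inl k))) (x k) * ψ (τ (e (Sum.inl k))) (x k))) *
            (∏ j : Fin N, (if σ (e (Sum.inr j)) = τ (e (Sum.inr j)) then (1 : ℝ) else 0))))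
      = ∑ w : Equiv.Perm (Fin r),
          ((Equiv.Perm.sign w : ℤ) : ℝ) *
            ((∏ k : Fin m, (ψ (σ (e (Sum.inl k))) (x k) * ψ (σ (w (e (Sum.inl k)))) (x k))) *
              (∏ j : Fin N, (if e (Sum.inr j) = w (e (Sum.inr j)) then (1 : ℝ) else 0))) := by
    intro σ
    rw [← Equiv.sum_comp (Equiv.mulLeft σ)
      (fun τ => (((Equiv.Perm.sign σ : ℤ) : ℝ) * ((Equiv.Perm.sign τ : ℤ) : ℝ)) *
        ((∏ k : Fin m, (ψ (σ (e (Sum.inl k))) (x k) * ψ (τ (e (Sum.inl k))) (x k))) *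
          (∏ j : Fin N, (if σ (e (Sum.inr j)) = τ (e (Sum.inr j)) then (1 : ℝ) else 0))))]
    refine Finset.sum_congr rfl fun w _ => ?_
    have hsign : ((Equiv.Perm.sign (σ * w) : ℤ) : ℝ)
        = ((Equiv.Perm.sign σ : ℤ) : ℝ) * ((Equiv.Perm.sign w : ℤ) : ℝ) := by
      rw [_root_.map_mul, Units.val_mul, Int.cast_mul]
    have happ : ∀ a, (Equiv.mulLeft σ w) a = σ (w a) := fun a => rfl
    have hif : ∀ j, (if σ (e (Sum.inr j)) = σ (w (e (Sum.inr j))) then (1 : ℝ) else 0)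
        = (if e (Sum.inr j) = w (e (Sum.inr j)) then (1 : ℝ) else 0) := by
      intro j
      congr 1
      simp [eq_iff_iff, EmbeddingLike.apply_eq_iff_eq]
    simp only [Equiv.coe_mulLeft, Equiv.Perm.mul_apply, hsign, hif]
    rw [← mul_assoc ((Equiv.Perm.sign σ : ℤ) : ℝ), hsq σ, one_mul]
    simp only [EmbeddingLike.apply_eq_iff_eq]
  -- abbreviations
  set F : Equiv.Perm (Fin m ⊕ Fin N) → ℝ := fun w =>
    ((Equiv.Perm.sign w : ℤ) : ℝ) *
      ((∑ σ : Equiv.Perm (Fin r), ∏ k : Fin m,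
          (ψ (σ (e (Sum.inl k))) (x k) * ψ (σ (e (w (Sum.inl k)))) (x k))) *
        ∏ j : Fin N, (if Sum.inr j = w (Sum.inr j) then (1 : ℝ) else 0)) with hFdef
  have hF : ∀ w : Equiv.Perm (Fin m ⊕ Fin N),
      (∃ j, w (Sum.inr j) ≠ Sum.inr j) → F w = 0 := by
    rintro w ⟨j, hj⟩
    have : (∏ j : Fin N, (if Sum.inr j = w (Sum.inr j) then (1 : ℝ) else 0)) = 0 :=
      Finset.prod_eq_zero (Finset.mem_univ j) (if_neg fun h => hj h.symm)
    simp [hFdef, this]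
  calc
    ∑ σ : Equiv.Perm (Fin r), ∑ τ : Equiv.Perm (Fin r),
      (((Equiv.Perm.sign σ : ℤ) : ℝ) * ((Equiv.Perm.sign τ : ℤ) : ℝ)) *
        ((∏ k : Fin m, (ψ (σ (e (Sum.inl k))) (x k) * ψ (τ (e (Sum.inl k))) (x k))) *
          (∏ j : Fin N, (if σ (e (Sum.inr j)) = τ (e (Sum.inr j)) then (1 : ℝ) else 0)))
      = ∑ σ : Equiv.Perm (Fin r), ∑ w : Equiv.Perm (Fin r),
          ((Equiv.Perm.sign w : ℤ) : ℝ) *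
            ((∏ k : Fin m, (ψ (σ (e (Sum.inl k))) (x k) * ψ (σ (w (e (Sum.inl k)))) (x k))) *
              (∏ j : Fin N, (if e (Sum.inr j) = w (e (Sum.inr j)) then (1 : ℝ) else 0))) :=
        Finset.sum_congr rfl fun σ _ => step1 σ
    _ = ∑ w : Equiv.Perm (Fin r), ∑ σ : Equiv.Perm (Fin r),
          ((Equiv.Perm.sign w : ℤ) : ℝ) *
            ((∏ k : Fin m, (ψ (σ (e (Sum.inl k))) (x k) * ψ (σ (w (e (Sum.inl k)))) (x k))) *
              (∏ j : Fin N, (if e (Sum.inr j) = w (e (Sum.inr j)) then (1 : ℝ) else 0))) :=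
        Finset.sum_comm
    _ = ∑ w : Equiv.Perm (Fin r),
          ((Equiv.Perm.sign w : ℤ) : ℝ) *
            ((∑ σ : Equiv.Perm (Fin r), ∏ k : Fin m,
                (ψ (σ (e (Sum.inl k))) (x k) * ψ (σ (w (e (Sum.inl k)))) (x k))) *
              (∏ j : Fin N, (if e (Sum.inr j) = w (e (Sum.inr j)) then (1 : ℝ) else 0))) := by
        refine Finset.sum_congr rfl fun w _ => ?_
        rw [Finset.sum_mul, Finset.mul_sum]
    _ = ∑ w' : Equiv.Perm (Fin m ⊕ Fin N), F w' := by
        rw [← Equiv.sum_comp e.permCongr]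
        refine Finset.sum_congr rfl fun w' _ => ?_
        simp only [hFdef, Equiv.permCongr_apply, Equiv.symm_apply_apply,
          Equiv.Perm.sign_permCongr, EmbeddingLike.apply_eq_iff_eq]
    _ = ∑ ρ : Equiv.Perm (Fin m), F (Equiv.sumCongr ρ (Equiv.refl (Fin N))) :=
        sum_perm_fix_inr F hF
    _ = ∑ ρ : Equiv.Perm (Fin m), ((Equiv.Perm.sign ρ : ℤ) : ℝ) *
          ∑ σ : Equiv.Perm (Fin r), ∏ k : Fin m,
            (ψ (σ (e (Sum.inl k))) (x k) * ψ (σ (e (Sum.inl (ρ k)))) (x k)) := by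
        refine Finset.sum_congr rfl fun ρ _ => ?_
        simp [hFdef, Equiv.Perm.sign_sumCongr]
    _ = ∑ ρ : Equiv.Perm (Fin m), ((Equiv.Perm.sign ρ : ℤ) : ℝ) *
          ∑ σ : Equiv.Perm (Fin r), ∏ k : Fin m,
            (ψ (σ (e (Sum.inl k))) (x k) * ψ (σ (e (Sum.inl k))) (x (ρ⁻¹ k))) := by
        refine Finset.sum_congr rfl fun ρ _ => ?_
        congr 1
        refine Finset.sum_congr rfl fun σ _ => ?_
        rw [Finset.prod_mul_distrib, Finset.prod_mul_distrib]
        congr 1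
        exact Equiv.Perm.prod_comp' ρ Finset.univ
          (fun t k => ψ (σ (e (Sum.inl t))) (x k)) (fun k _ => Finset.mem_univ _)
    _ = ∑ ρ : Equiv.Perm (Fin m), ((Equiv.Perm.sign ρ : ℤ) : ℝ) *
          ∑ σ : Equiv.Perm (Fin r), ∏ k : Fin m,
            (ψ (σ (e (Sum.inl k))) (x k) * ψ (σ (e (Sum.inl k))) (x (ρ k))) := by
        rw [← Equiv.sum_comp (Equiv.inv (Equiv.Perm (Fin m)))
          (fun ρ => ((Equiv.Perm.sign ρ : ℤ) : ℝ) *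
            ∑ σ : Equiv.Perm (Fin r), ∏ k : Fin m,
              (ψ (σ (e (Sum.inl k))) (x k) * ψ (σ (e (Sum.inl k))) (x (ρ k))))]
        refine Finset.sum_congr rfl fun ρ _ => ?_
        simp [Equiv.Perm.sign_inv]
    _ = ∑ ρ : Equiv.Perm (Fin m), ((Equiv.Perm.sign ρ : ℤ) : ℝ) *
          ((N.factorial : ℝ) *
            ∑ f ∈ Finset.univ.filter (fun f : Fin m → Fin r => Function.Injective f),
              ∏ k : Fin m, (ψ (f k) (x k) * ψ (f k) (x (ρ k)))) := by
        refine Finset.sum_congr rfl fun ρ _ => ?_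
        congr 1
        have := sum_perm_comp e
          (fun f : Fin m → Fin r => ∏ k : Fin m, (ψ (f k) (x k) * ψ (f k) (x (ρ k))))
        simpa using this
    _ = (N.factorial : ℝ) * ∑ ρ : Equiv.Perm (Fin m), ((Equiv.Perm.sign ρ : ℤ) : ℝ) *
          ∑ f ∈ Finset.univ.filter (fun f : Fin m → Fin r => Function.Injective f),
            ∏ k : Fin m, (ψ (f k) (x k) * ψ (f k) (x (ρ k))) := by
        rw [Finset.mul_sum]
        exact Finset.sum_congr rfl fun ρ _ => by ring
    _ = (N.factorial : ℝ) * ∑ ρ : Equiv.Perm (Fin m), ((Equiv.Perm.sign ρ : ℤ) : ℝ) *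
          ∑ f : Fin m → Fin r, ∏ k : Fin m, (ψ (f k) (x k) * ψ (f k) (x (ρ k))) := by
        rw [sum_filter_inj_eq_sum_univ (fun k i => ψ i (x k)) (fun l i => ψ i (x l))]

end comb

theorem dyson_determinantal_formula
    (r : ℕ) (hr : 1 ≤ r) (ψ : Fin r → ℝ → ℝ)
    (hmeas : ∀ i, Measurable (ψ i))
    (hint : ∀ i j, Integrable (fun t => ψ i t * ψ j t))
    (horth : ∀ i j, ∫ t, ψ i t * ψ j t = if i = j then (1 : ℝ) else 0)
    (K : ℝ → ℝ → ℝ) (hK : ∀ x y, K x y = ∑ i, ψ i x * ψ i y)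
    (m : ℕ) (hm : m ≤ r) (x : Fin m → ℝ) :
    (∫ y : Fin (r - m) → ℝ,
        Matrix.det (Matrix.of fun k l : Fin r =>
          K ((Fin.append x y : Fin (m + (r - m)) → ℝ)
                (Fin.cast (Nat.add_sub_cancel' hm).symm k))
            ((Fin.append x y : Fin (m + (r - m)) → ℝ)
                (Fin.cast (Nat.add_sub_cancel' hm).symm l)))) =
      ((r - m).factorial : ℝ) *
        Matrix.det (Matrix.of fun k l : Fin m => K (x k) (x l)) := by
  classical
  set e : Fin m ⊕ Fin (r - m) ≃ Fin r :=
    finSumFinEquiv.trans (finCongr (Nat.add_sub_cancel' hm)) with he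
  -- the m × m determinant, expanded
  have hdetm : Matrix.det (Matrix.of fun k l : Fin m => K (x k) (x l))
      = ∑ ρ : Equiv.Perm (Fin m), ((Equiv.Perm.sign ρ : ℤ) : ℝ) *
          ∑ f : Fin m → Fin r, ∏ k : Fin m, (ψ (f k) (x k) * ψ (f k) (x (ρ k))) := by
    rw [Matrix.det_apply']
    refine Finset.sum_congr rfl fun ρ _ => ?_
    congr 1
    calc ∏ k : Fin m, (Matrix.of fun k l : Fin m => K (x k) (x l)) (ρ k) k
        = ∏ k : Fin m, ∑ i : Fin r, ψ i (x (ρ k)) * ψ i (x k) := by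
          refine Finset.prod_congr rfl fun k _ => ?_
          simp [hK]
      _ = ∑ f : Fin m → Fin r, ∏ k : Fin m, (ψ (f k) (x (ρ k)) * ψ (f k) (x k)) :=
          Fintype.prod_sum _
      _ = ∑ f : Fin m → Fin r, ∏ k : Fin m, (ψ (f k) (x k) * ψ (f k) (x (ρ k))) := by
          exact Finset.sum_congr rfl fun f _ =>
            Finset.prod_congr rfl fun k _ => mul_comm _ _
  -- expansion of the r × r determinant, pointwise in y
  have hdet : ∀ y : Fin (r - m) → ℝ,
      Matrix.det (Matrix.of fun k l : Fin r =>
          K ((Fin.append x y : Fin (m + (r - m)) → ℝ)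
                (Fin.cast (Nat.add_sub_cancel' hm).symm k))
            ((Fin.append x y : Fin (m + (r - m)) → ℝ)
                (Fin.cast (Nat.add_sub_cancel' hm).symm l)))
        = ∑ σ : Equiv.Perm (Fin r), ∑ τ : Equiv.Perm (Fin r),
            (((Equiv.Perm.sign σ : ℤ) : ℝ) * ((Equiv.Perm.sign τ : ℤ) : ℝ)) *
              ((∏ k : Fin m, (ψ (σ (e (Sum.inl k))) (x k) * ψ (τ (e (Sum.inl k))) (x k))) *
                (∏ j : Fin (r - m),
                  (ψ (σ (e (Sum.inr j))) (y j) * ψ (τ (e (Sum.inr j))) (y j)))) := by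
    intro y
    set z : Fin r → ℝ :=
      fun a => (Fin.append x y : Fin (m + (r - m)) → ℝ)
        (Fin.cast (Nat.add_sub_cancel' hm).symm a) with hz
    have hze : ∀ s : Fin m ⊕ Fin (r - m), z (e s) = Sum.elim x y s := by
      rintro (k | j) <;>
        simp [hz, he, Fin.append_left, Fin.append_right]
    have hM : (Matrix.of fun k l : Fin r => K (z k) (z l))
        = (Matrix.of fun i a : Fin r => ψ i (z a))ᵀ *
          (Matrix.of fun i a : Fin r => ψ i (z a)) := by
      ext k l
      simp [Matrix.mul_apply, hK, Matrix.transpose_apply]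
    rw [hM, Matrix.det_mul, Matrix.det_transpose, Matrix.det_apply', Finset.sum_mul_sum]
    refine Finset.sum_congr rfl fun σ _ => Finset.sum_congr rfl fun τ _ => ?_
    simp only [Matrix.of_apply]
    have hPQ : (∏ a : Fin r, ψ (σ a) (z a)) * (∏ a : Fin r, ψ (τ a) (z a))
        = (∏ k : Fin m, (ψ (σ (e (Sum.inl k))) (x k) * ψ (τ (e (Sum.inl k))) (x k))) *
          (∏ j : Fin (r - m),
            (ψ (σ (e (Sum.inr j))) (y j) * ψ (τ (e (Sum.inr j))) (y j))) := by
      rw [← Finset.prod_mul_distrib,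
        ← Equiv.prod_comp e (fun a => ψ (σ a) (z a) * ψ (τ a) (z a)),
        Fintype.prod_sum_type]
      congr 1
      · exact Finset.prod_congr rfl fun k _ => by simp [hze (Sum.inl k)]
      · exact Finset.prod_congr rfl fun j _ => by simp [hze (Sum.inr j)]
    calc (((Equiv.Perm.sign σ : ℤ) : ℝ) * ∏ a : Fin r, ψ (σ a) (z a)) *
          (((Equiv.Perm.sign τ : ℤ) : ℝ) * ∏ a : Fin r, ψ (τ a) (z a))
        = (((Equiv.Perm.sign σ : ℤ) : ℝ) * ((Equiv.Perm.sign τ : ℤ) : ℝ)) *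
            ((∏ a : Fin r, ψ (σ a) (z a)) * (∏ a : Fin r, ψ (τ a) (z a))) := by ring
      _ = _ := by rw [hPQ]
  simp only [hdet]
  -- integrability of each term
  have hterm : ∀ σ τ : Equiv.Perm (Fin r),
      Integrable (fun y : Fin (r - m) → ℝ =>
        (((Equiv.Perm.sign σ : ℤ) : ℝ) * ((Equiv.Perm.sign τ : ℤ) : ℝ)) *
          ((∏ k : Fin m, (ψ (σ (e (Sum.inl k))) (x k) * ψ (τ (e (Sum.inl k))) (x k))) *
            (∏ j : Fin (r - m),
              (ψ (σ (e (Sum.inr j))) (y j) * ψ (τ (e (Sum.inr j))) (y j))))) := by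
    intro σ τ
    have base : Integrable (fun y : Fin (r - m) → ℝ =>
        ∏ j : Fin (r - m), (ψ (σ (e (Sum.inr j))) (y j) * ψ (τ (e (Sum.inr j))) (y j))) :=
      Integrable.fintype_prod
        (f := fun j t => ψ (σ (e (Sum.inr j))) t * ψ (τ (e (Sum.inr j))) t)
        (fun j => hint _ _)
    exact (base.const_mul _).const_mul _
  rw [MeasureTheory.integral_finset_sum _
    (fun σ _ => integrable_finset_sum _ (fun τ _ => hterm σ τ))]
  have hint2 : ∀ σ : Equiv.Perm (Fin r),
      (∫ y : Fin (r - m) → ℝ, ∑ τ : Equiv.Perm (Fin r),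
        (((Equiv.Perm.sign σ : ℤ) : ℝ) * ((Equiv.Perm.sign τ : ℤ) : ℝ)) *
          ((∏ k : Fin m, (ψ (σ (e (Sum.inl k))) (x k) * ψ (τ (e (Sum.inl k))) (x k))) *
            (∏ j : Fin (r - m),
              (ψ (σ (e (Sum.inr j))) (y j) * ψ (τ (e (Sum.inr j))) (y j)))))
      = ∑ τ : Equiv.Perm (Fin r),
          (((Equiv.Perm.sign σ : ℤ) : ℝ) * ((Equiv.Perm.sign τ : ℤ) : ℝ)) *
            ((∏ k : Fin m, (ψ (σ (e (Sum.inl k))) (x k) * ψ (τ (e (Sum.inl k))) (x k))) *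
              (∏ j : Fin (r - m),
                (if σ (e (Sum.inr j)) = τ (e (Sum.inr j)) then (1 : ℝ) else 0))) := by
    intro σ
    rw [MeasureTheory.integral_finset_sum _ (fun τ _ => hterm σ τ)]
    refine Finset.sum_congr rfl fun τ _ => ?_
    rw [MeasureTheory.integral_const_mul, MeasureTheory.integral_const_mul,
      MeasureTheory.volume_pi, MeasureTheory.integral_fintype_prod_eq_prod (ι := Fin (r - m))
        (fun j t => ψ (σ (e (Sum.inr j))) t * ψ (τ (e (Sum.inr j))) t)]
    congr 1
    congr 1
    exact Finset.prod_congr rfl fun j _ => horth _ _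
  rw [Finset.sum_congr rfl fun σ _ => hint2 σ]
  rw [combinatorial_step e ψ x, hdetm]
end

section
/- Let r ≥ 1 and let f, g : Fin r → ℝ → ℝ be measurable functions such that for all i, j the product t ↦ f i t · g j t is Lebesgue-integrable on ℝ. Then ∫_{ℝ^r} det (f i (x j))_{i,j ∈ Fin r} · det (g i (x j))_{i,j ∈ Fin r} dx = r! · det (∫_ℝ f i t · g j t dt)_{i,j ∈ Fin r}. -/
open MeasureTheory Matrix

theorem andreief_identity
    (r : ℕ) (hr : 1 ≤ r) (f g : Fin r → ℝ → ℝ)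
    (hf : ∀ i, Measurable (f i)) (hg : ∀ i, Measurable (g i))
    (hint : ∀ i j, Integrable (fun t => f i t * g j t)) :
    ∫ x : Fin r → ℝ,
        Matrix.det (Matrix.of fun i j => f i (x j)) *
          Matrix.det (Matrix.of fun i j => g i (x j)) =
      (r.factorial : ℝ) * Matrix.det (Matrix.of fun i j => ∫ t, f i t * g j t) := by
  classical
  set A : Matrix (Fin r) (Fin r) ℝ := Matrix.of fun i j => ∫ t, f i t * g j t with hA
  have key : ∀ σ τ : Equiv.Perm (Fin r),
      ∫ x : Fin r → ℝ, (∏ j, f (σ j) (x j)) * (∏ j, g (τ j) (x j))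
        = ∏ j, A (σ j) (τ j) := by
    intro σ τ
    have : ∀ x : Fin r → ℝ, (∏ j, f (σ j) (x j)) * (∏ j, g (τ j) (x j))
        = ∏ j, (f (σ j) (x j) * g (τ j) (x j)) := by
      intro x; rw [Finset.prod_mul_distrib]
    simp_rw [this]
    exact integral_fintype_prod_eq_prod (fun j t => f (σ j) t * g (τ j) t)
  have hintg : ∀ σ τ : Equiv.Perm (Fin r),
      Integrable (fun x : Fin r → ℝ => (∏ j, f (σ j) (x j)) * (∏ j, g (τ j) (x j))) := by
    intro σ τ
    have : ∀ x : Fin r → ℝ, (∏ j, f (σ j) (x j)) * (∏ j, g (τ j) (x j))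
        = ∏ j, (f (σ j) (x j) * g (τ j) (x j)) := by
      intro x; rw [Finset.prod_mul_distrib]
    simp_rw [this]
    exact Integrable.fintype_prod fun j => hint (σ j) (τ j)
  -- expand determinants
  have expand : ∀ x : Fin r → ℝ,
      Matrix.det (Matrix.of fun i j => f i (x j)) *
        Matrix.det (Matrix.of fun i j => g i (x j))
      = ∑ σ : Equiv.Perm (Fin r), ∑ τ : Equiv.Perm (Fin r),
          (((Equiv.Perm.sign σ : ℤ) : ℝ) * ((Equiv.Perm.sign τ : ℤ) : ℝ)) *
            ((∏ j, f (σ j) (x j)) * (∏ j, g (τ j) (x j))) := by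
    intro x
    rw [Matrix.det_apply', Matrix.det_apply', Finset.sum_mul_sum]
    refine Finset.sum_congr rfl fun σ _ => Finset.sum_congr rfl fun τ _ => ?_
    simp only [Matrix.of_apply]
    ring
  simp_rw [expand]
  rw [integral_finset_sum _ fun σ _ => integrable_finset_sum _ fun τ _ =>
    ((hintg σ τ).const_mul _)]
  have : ∀ σ : Equiv.Perm (Fin r),
      (∫ x : Fin r → ℝ, ∑ τ : Equiv.Perm (Fin r),
        (((Equiv.Perm.sign σ : ℤ) : ℝ) * ((Equiv.Perm.sign τ : ℤ) : ℝ)) *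
          ((∏ j, f (σ j) (x j)) * (∏ j, g (τ j) (x j)))) = A.det := by
    intro σ
    rw [integral_finset_sum _ fun τ _ => (hintg σ τ).const_mul _]
    have step : ∀ τ : Equiv.Perm (Fin r),
        (∫ x : Fin r → ℝ,
          (((Equiv.Perm.sign σ : ℤ) : ℝ) * ((Equiv.Perm.sign τ : ℤ) : ℝ)) *
            ((∏ j, f (σ j) (x j)) * (∏ j, g (τ j) (x j))))
        = (((Equiv.Perm.sign σ : ℤ) : ℝ) * ((Equiv.Perm.sign τ : ℤ) : ℝ)) *
            ∏ j, A (σ j) (τ j) := by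
      intro τ
      rw [integral_const_mul, key]
    simp_rw [step]
    -- reindex τ ↦ σ * τ⁻¹
    rw [Matrix.det_apply']
    refine Fintype.sum_equiv ((Equiv.inv (Equiv.Perm (Fin r))).trans (Equiv.mulLeft σ)) _ _
      fun τ => ?_
    simp only [Equiv.trans_apply, Equiv.inv_apply, Equiv.coe_mulLeft]
    have hprod : (∏ x, A ((σ * τ⁻¹) x) x) = ∏ j, A (σ j) (τ j) := by
      rw [← Equiv.prod_comp τ (fun x => A ((σ * τ⁻¹) x) x)]
      simp [Equiv.Perm.mul_apply]
    rw [hprod]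
    simp only [Equiv.Perm.sign_mul, Equiv.Perm.sign_inv, Units.val_mul, Int.cast_mul]
  simp_rw [this]
  rw [Finset.sum_const, Finset.card_univ, Fintype.card_perm, nsmul_eq_mul]
  simp [Fintype.card_fin]
end
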